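/- Lower bound via the modulus of continuity under Huber contamination: for n ∈ ℕ, ε ∈ [0,1) and θ ∈ Θ, let X = Y^n and 𝒫_{θ,ε} := {P^{⊗n} : P = (1−ε)R + εQ with R ∈ ℛ_θ and Q an arbitrary probability measure on Y}. Then for every δ ∈ (0,1/2), the lower minimax (1−δ)th quantile of the loss L = g∘d over this contaminated class satisfies M_−(δ) ≥ ω(ε, ℛ_Θ, g). -/

import Mathlib

open MeasureTheory ENNReal

/-- The lower minimax `(1-δ)`th quantile. -/
noncomputable def lowerMinimaxQuantile {Θ 𝒳 : Type*} [MeasurableSpace Θ] [MeasurableSpace 𝒳]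
    (Pfam : Θ → Set (Measure 𝒳)) (L : Θ → Θ → ℝ) (δ : ℝ) : ℝ≥0∞ :=
  sInf {r : ℝ≥0∞ |
    (⨅ T : {f : 𝒳 → Θ // Measurable f}, ⨆ θ : Θ, ⨆ P ∈ Pfam θ,
      P {x | r < ENNReal.ofReal (L (T.1 x) θ)}) ≤ ENNReal.ofReal δ}

/-- Total variation distance between two measures. -/
noncomputable def tvDist {𝒴 : Type*} [MeasurableSpace 𝒴] (P Q : Measure 𝒴) : ℝ :=
  ⨆ A : {A : Set 𝒴 // MeasurableSet A}, |(P A.1).toReal - (Q A.1).toReal|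

/-- The modulus of continuity `ω(ε, ℛ_Θ, g)`, as a value in `ℝ≥0∞`. -/
noncomputable def modulusOfContinuity {Θ 𝒴 : Type*} [PseudoMetricSpace Θ] [MeasurableSpace 𝒴]
    (Rfam : Θ → Set (Measure 𝒴)) (g : ℝ → ℝ) (ε : ℝ) : ℝ≥0∞ :=
  sSup {t : ℝ≥0∞ | ∃ θ₁ θ₂ : Θ, ∃ R₁ ∈ Rfam θ₁, ∃ R₂ ∈ Rfam θ₂,
    tvDist R₁ R₂ ≤ ε / (1 - ε) ∧ t = ENNReal.ofReal (g (dist θ₁ θ₂ / 2))}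

lemma tvDist_ge {𝒴 : Type*} [MeasurableSpace 𝒴] (P Q : Measure 𝒴)
    [IsProbabilityMeasure P] [IsProbabilityMeasure Q] {s : Set 𝒴} (hs : MeasurableSet s) :
    |(P s).toReal - (Q s).toReal| ≤ tvDist P Q := by
  apply le_ciSup (f := fun A : {A : Set 𝒴 // MeasurableSet A} => |(P A.1).toReal - (Q A.1).toReal|)
    ?_ ⟨s, hs⟩
  refine ⟨2, ?_⟩
  rintro _ ⟨A, rfl⟩
  have h1 : (P A.1).toReal ≤ 1 := by
    simpa using ENNReal.toReal_mono (by simp) (prob_le_one (μ := P) (s := A.1))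
  have h2 : (Q A.1).toReal ≤ 1 := by
    simpa using ENNReal.toReal_mono (by simp) (prob_le_one (μ := Q) (s := A.1))
  have h3 : 0 ≤ (P A.1).toReal := ENNReal.toReal_nonneg
  have h4 : 0 ≤ (Q A.1).toReal := ENNReal.toReal_nonneg
  rw [abs_le]; constructor <;> linarith

lemma exists_common_mixture {𝒴 : Type*} [MeasurableSpace 𝒴]
    (R₁ R₂ : Measure 𝒴) [IsProbabilityMeasure R₁] [IsProbabilityMeasure R₂]
    (ε : ℝ) (hε : ε ∈ Set.Ico (0:ℝ) 1) (htv : tvDist R₁ R₂ ≤ ε / (1 - ε)) :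
    ∃ Q₁ Q₂ : Measure 𝒴, IsProbabilityMeasure Q₁ ∧ IsProbabilityMeasure Q₂ ∧
      ENNReal.ofReal (1 - ε) • R₁ + ENNReal.ofReal ε • Q₁ =
      ENNReal.ofReal (1 - ε) • R₂ + ENNReal.ofReal ε • Q₂ := by
  have hε1 : (0:ℝ) < 1 - ε := by linarith [hε.2]
  have tvfact : ∀ s : Set 𝒴, MeasurableSet s →
      |(R₁ s).toReal - (R₂ s).toReal| ≤ ε / (1 - ε) :=
    fun s hs => le_trans (tvDist_ge R₁ R₂ hs) htv
  rcases eq_or_lt_of_le hε.1 with h0 | h0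
  · -- ε = 0
    have hR : R₁ = R₂ := by
      refine Measure.ext fun s hs => ?_
      have := tvfact s hs
      rw [← h0] at this
      simp only [zero_div] at this
      have heq : (R₁ s).toReal = (R₂ s).toReal := by
        have h' : |(R₁ s).toReal - (R₂ s).toReal| = 0 :=
          le_antisymm this (abs_nonneg _)
        linarith [abs_eq_zero.mp h']
      exact (ENNReal.toReal_eq_toReal_iff' (measure_ne_top _ _) (measure_ne_top _ _)).mp heq
    exact ⟨R₁, R₁, inferInstance, inferInstance, by rw [hR]⟩
  · -- 0 < ε
    set e : ℝ≥0∞ := ENNReal.ofReal ε with he_def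
    set e' : ℝ≥0∞ := ENNReal.ofReal (1 - ε) with he'_def
    have he0 : e ≠ 0 := (ENNReal.ofReal_pos.mpr h0).ne'
    have heT : e ≠ ⊤ := ENNReal.ofReal_ne_top
    obtain ⟨s, hs, hss, hsc⟩ := hahn_decomposition (μ := R₂) (ν := R₁)
    -- on s : R₁ t ≤ R₂ t ; on sᶜ : R₂ t ≤ R₁ t
    set μ : Measure 𝒴 := R₂.restrict s - R₁.restrict s with hμ_def
    set ν : Measure 𝒴 := R₁.restrict sᶜ - R₂.restrict sᶜ with hν_def
    have h₁le : R₁.restrict s ≤ R₂.restrict s := by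
      refine Measure.le_iff.mpr fun t ht => ?_
      rw [Measure.restrict_apply ht, Measure.restrict_apply ht]
      exact hss _ (ht.inter hs) Set.inter_subset_right
    have h₂le : R₂.restrict sᶜ ≤ R₁.restrict sᶜ := by
      refine Measure.le_iff.mpr fun t ht => ?_
      rw [Measure.restrict_apply ht, Measure.restrict_apply ht]
      exact hsc _ (ht.inter hs.compl) Set.inter_subset_right
    have μ_apply : ∀ t : Set 𝒴, MeasurableSet t → μ t = R₂ (t ∩ s) - R₁ (t ∩ s) := by
      intro t ht
      rw [hμ_def, Measure.sub_apply ht h₁le, Measure.restrict_apply ht,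
        Measure.restrict_apply ht]
    have ν_apply : ∀ t : Set 𝒴, MeasurableSet t → ν t = R₁ (t ∩ sᶜ) - R₂ (t ∩ sᶜ) := by
      intro t ht
      rw [hν_def, Measure.sub_apply ht h₂le, Measure.restrict_apply ht,
        Measure.restrict_apply ht]
    have key : R₁ + μ = R₂ + ν := by
      refine Measure.ext fun t ht => ?_
      rw [Measure.add_apply, Measure.add_apply, μ_apply t ht, ν_apply t ht]
      have h1 : R₁ (t ∩ s) + R₁ (t \ s) = R₁ t := measure_inter_add_diff t hs
      have h2 : R₂ (t ∩ s) + R₂ (t \ s) = R₂ t := measure_inter_add_diff t hs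
      rw [Set.diff_eq] at h1 h2
      have ha : R₁ (t ∩ s) ≤ R₂ (t ∩ s) := hss _ (ht.inter hs) Set.inter_subset_right
      have hb : R₂ (t ∩ sᶜ) ≤ R₁ (t ∩ sᶜ) := hsc _ (ht.inter hs.compl) Set.inter_subset_right
      rw [← h1, ← h2]
      calc R₁ (t ∩ s) + R₁ (t ∩ sᶜ) + (R₂ (t ∩ s) - R₁ (t ∩ s))
          = R₁ (t ∩ sᶜ) + (R₁ (t ∩ s) + (R₂ (t ∩ s) - R₁ (t ∩ s))) := by ring
        _ = R₁ (t ∩ sᶜ) + R₂ (t ∩ s) := by rw [add_tsub_cancel_of_le ha]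
        _ = R₂ (t ∩ s) + (R₂ (t ∩ sᶜ) + (R₁ (t ∩ sᶜ) - R₂ (t ∩ sᶜ))) := by
            rw [add_tsub_cancel_of_le hb]; ring
        _ = R₂ (t ∩ s) + R₂ (t ∩ sᶜ) + (R₁ (t ∩ sᶜ) - R₂ (t ∩ sᶜ)) := by ring
    have hμ_fin : μ Set.univ ≠ ⊤ := by
      rw [μ_apply _ MeasurableSet.univ]
      exact (lt_of_le_of_lt tsub_le_self (measure_lt_top _ _)).ne
    have hνμ : ν Set.univ = μ Set.univ := by
      have := congrArg (fun m : Measure 𝒴 => m Set.univ) key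
      simp only [Measure.add_apply] at this
      have h1 : R₁ Set.univ = R₂ Set.univ := by simp
      rw [h1] at this
      exact ((ENNReal.add_right_inj (measure_ne_top R₂ _)).mp this).symm
    -- bound : e' * μ univ ≤ e
    have hmle : e' * μ Set.univ ≤ e := by
      have hs1 : R₁ s ≤ R₂ s := hss s hs (le_refl s)
      have hμu : μ Set.univ = R₂ s - R₁ s := by
        rw [μ_apply _ MeasurableSet.univ, Set.univ_inter]
      have htr : (μ Set.univ).toReal ≤ ε / (1 - ε) := by
        rw [hμu, ENNReal.toReal_sub_of_le hs1 (measure_ne_top _ _)]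
        have := tvfact s hs
        rw [abs_sub_comm] at this
        exact le_trans (le_abs_self _) this
      have hμu_le : μ Set.univ ≤ ENNReal.ofReal (ε / (1 - ε)) :=
        (ENNReal.le_ofReal_iff_toReal_le hμ_fin (by positivity)).mpr htr
      calc e' * μ Set.univ ≤ e' * ENNReal.ofReal (ε / (1 - ε)) := by
            exact mul_le_mul_right hμu_le _
        _ = ENNReal.ofReal ((1 - ε) * (ε / (1 - ε))) := by
            rw [he'_def, ENNReal.ofReal_mul hε1.le]
        _ = e := by rw [he_def]; congr 1; field_simp
    set c : ℝ≥0∞ := (e - e' * μ Set.univ) / e with hc_def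
    have hec : e * c = e - e' * μ Set.univ := ENNReal.mul_div_cancel he0 heT
    have hee' : e * (e' / e) = e' := ENNReal.mul_div_cancel he0 heT
    have hprob : ∀ m : Measure 𝒴, m Set.univ = μ Set.univ →
        IsProbabilityMeasure ((e'/e) • m + c • R₁) := by
      intro m hm
      constructor
      have h1 : ((e'/e) • m + c • R₁) Set.univ = (e'/e) * m Set.univ + c * R₁ Set.univ := by
        simp [Measure.add_apply, Measure.smul_apply, smul_eq_mul]
      rw [h1, hm, measure_univ (μ := R₁), mul_one, hc_def, div_eq_mul_inv, div_eq_mul_inv]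
      calc e' * e⁻¹ * μ Set.univ + (e - e' * μ Set.univ) * e⁻¹
          = (e' * μ Set.univ + (e - e' * μ Set.univ)) * e⁻¹ := by ring
        _ = e * e⁻¹ := by rw [add_tsub_cancel_of_le hmle]
        _ = 1 := ENNReal.mul_inv_cancel he0 heT
    refine ⟨(e'/e) • μ + c • R₁, (e'/e) • ν + c • R₁, hprob μ rfl, hprob ν hνμ, ?_⟩
    · simp only [smul_add, smul_smul, hee', hec]
      calc e' • R₁ + (e' • μ + (e - e' * μ Set.univ) • R₁)
          = e' • (R₁ + μ) + (e - e' * μ Set.univ) • R₁ := by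
            rw [smul_add]; abel
        _ = e' • (R₂ + ν) + (e - e' * μ Set.univ) • R₁ := by rw [key]
        _ = e' • R₂ + (e' • ν + (e - e' * μ Set.univ) • R₁) := by
            rw [smul_add]; abel

/-- lower bound via the modulus of continuity under Huber contamination. -/
theorem lowerMinimaxQuantile_ge_modulusOfContinuity
    {Θ 𝒴 : Type*} [PseudoMetricSpace Θ] [Nonempty Θ] [MeasurableSpace Θ] [BorelSpace Θ]
    [MeasurableSpace 𝒴]
    (Rfam : Θ → Set (Measure 𝒴)) (hRfam : ∀ θ, ∀ R ∈ Rfam θ, IsProbabilityMeasure R)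
    (g : ℝ → ℝ) (hg : MonotoneOn g (Set.Ici 0)) (hg0 : ∀ x ∈ Set.Ici (0 : ℝ), 0 ≤ g x)
    (n : ℕ) (hn : 0 < n) (ε : ℝ) (hε : ε ∈ Set.Ico (0 : ℝ) 1)
    (δ : ℝ) (hδ : δ ∈ Set.Ioo (0 : ℝ) (1/2)) :
    modulusOfContinuity Rfam g ε ≤
      lowerMinimaxQuantile
        (fun θ => {μ : Measure (Fin n → 𝒴) | ∃ R ∈ Rfam θ, ∃ Q : Measure 𝒴,
          IsProbabilityMeasure Q ∧
          μ = Measure.pi fun _ : Fin n => ENNReal.ofReal (1 - ε) • R + ENNReal.ofReal ε • Q})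
        (fun a b => g (dist a b)) δ := by
  refine le_sInf fun r hr => sSup_le fun t ht => ?_
  obtain ⟨θ₁, θ₂, R₁, hR₁, R₂, hR₂, htv, rfl⟩ := ht
  by_contra hlt
  push_neg at hlt
  haveI := hRfam θ₁ R₁ hR₁
  haveI := hRfam θ₂ R₂ hR₂
  obtain ⟨Q₁, Q₂, hQ₁, hQ₂, hmix⟩ := exists_common_mixture R₁ R₂ ε hε htv
  set M : Measure 𝒴 := ENNReal.ofReal (1 - ε) • R₁ + ENNReal.ofReal ε • Q₁ with hM_def
  haveI hMprob : IsProbabilityMeasure M := by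
    constructor
    rw [hM_def, Measure.add_apply, Measure.smul_apply, Measure.smul_apply,
      measure_univ, measure_univ, smul_eq_mul, smul_eq_mul, mul_one, mul_one,
      ← ENNReal.ofReal_add (by linarith [hε.2]) hε.1]
    norm_num
  set P : Measure (Fin n → 𝒴) := Measure.pi (fun _ : Fin n => M) with hP_def
  haveI hPprob : IsProbabilityMeasure P := by
    rw [hP_def]; infer_instance
  have hP₁ : ∃ R ∈ Rfam θ₁, ∃ Q : Measure 𝒴, IsProbabilityMeasure Q ∧
      P = Measure.pi fun _ : Fin n => ENNReal.ofReal (1 - ε) • R + ENNReal.ofReal ε • Q :=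
    ⟨R₁, hR₁, Q₁, hQ₁, rfl⟩
  have hP₂ : ∃ R ∈ Rfam θ₂, ∃ Q : Measure 𝒴, IsProbabilityMeasure Q ∧
      P = Measure.pi fun _ : Fin n => ENNReal.ofReal (1 - ε) • R + ENNReal.ofReal ε • Q :=
    ⟨R₂, hR₂, Q₂, hQ₂, by rw [hP_def]; exact congrArg Measure.pi (funext fun _ => hmix)⟩
  -- for each estimator, the sup is at least 1/2
  have key : ∀ T : {f : (Fin n → 𝒴) → Θ // Measurable f},
      (1 : ℝ≥0∞) / 2 ≤ ⨆ θ : Θ, ⨆ P' ∈ (fun θ => {μ : Measure (Fin n → 𝒴) |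
          ∃ R ∈ Rfam θ, ∃ Q : Measure 𝒴, IsProbabilityMeasure Q ∧
          μ = Measure.pi fun _ : Fin n => ENNReal.ofReal (1 - ε) • R + ENNReal.ofReal ε • Q}) θ,
        P' {x | r < ENNReal.ofReal (g (dist (T.1 x) θ))} := by
    intro T
    set A₁ : Set (Fin n → 𝒴) := {x | r < ENNReal.ofReal (g (dist (T.1 x) θ₁))} with hA₁
    set A₂ : Set (Fin n → 𝒴) := {x | r < ENNReal.ofReal (g (dist (T.1 x) θ₂))} with hA₂
    have hcover : A₁ ∪ A₂ = Set.univ := by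
      refine Set.eq_univ_of_forall fun x => ?_
      have htri : dist θ₁ θ₂ ≤ dist (T.1 x) θ₁ + dist (T.1 x) θ₂ := by
        have := dist_triangle θ₁ (T.1 x) θ₂
        rw [dist_comm θ₁ (T.1 x)] at this
        linarith
      rcases le_total (dist (T.1 x) θ₂) (dist (T.1 x) θ₁) with hcmp | hcmp
      · left
        have hd : dist θ₁ θ₂ / 2 ≤ dist (T.1 x) θ₁ := by linarith
        have hgle : g (dist θ₁ θ₂ / 2) ≤ g (dist (T.1 x) θ₁) :=
          hg (Set.mem_Ici.mpr (by positivity)) (Set.mem_Ici.mpr dist_nonneg) hd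
        exact lt_of_lt_of_le hlt (ENNReal.ofReal_le_ofReal hgle)
      · right
        have hd : dist θ₁ θ₂ / 2 ≤ dist (T.1 x) θ₂ := by linarith
        have hgle : g (dist θ₁ θ₂ / 2) ≤ g (dist (T.1 x) θ₂) :=
          hg (Set.mem_Ici.mpr (by positivity)) (Set.mem_Ici.mpr dist_nonneg) hd
        exact lt_of_lt_of_le hlt (ENNReal.ofReal_le_ofReal hgle)
    have hsum : 1 ≤ P A₁ + P A₂ := by
      calc (1 : ℝ≥0∞) = P Set.univ := measure_univ.symm
        _ = P (A₁ ∪ A₂) := by rw [hcover]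
        _ ≤ P A₁ + P A₂ := measure_union_le _ _
    set S := ⨆ θ : Θ, ⨆ P' ∈ (fun θ => {μ : Measure (Fin n → 𝒴) |
          ∃ R ∈ Rfam θ, ∃ Q : Measure 𝒴, IsProbabilityMeasure Q ∧
          μ = Measure.pi fun _ : Fin n => ENNReal.ofReal (1 - ε) • R + ENNReal.ofReal ε • Q}) θ,
        P' {x | r < ENNReal.ofReal (g (dist (T.1 x) θ))} with hS
    have h₁ : P A₁ ≤ S := by
      rw [hS]
      exact le_iSup_of_le θ₁ (le_iSup₂_of_le P hP₁ le_rfl)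
    have h₂ : P A₂ ≤ S := by
      rw [hS]
      exact le_iSup_of_le θ₂ (le_iSup₂_of_le P hP₂ le_rfl)
    by_contra hS2
    push_neg at hS2
    have : P A₁ + P A₂ < 1 / 2 + 1 / 2 :=
      ENNReal.add_lt_add (lt_of_le_of_lt h₁ hS2) (lt_of_le_of_lt h₂ hS2)
    rw [ENNReal.add_halves] at this
    exact absurd hsum (not_le.mpr this)
  have hinf : (1 : ℝ≥0∞) / 2 ≤ ⨅ T : {f : (Fin n → 𝒴) → Θ // Measurable f},
      ⨆ θ : Θ, ⨆ P' ∈ (fun θ => {μ : Measure (Fin n → 𝒴) |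
          ∃ R ∈ Rfam θ, ∃ Q : Measure 𝒴, IsProbabilityMeasure Q ∧
          μ = Measure.pi fun _ : Fin n => ENNReal.ofReal (1 - ε) • R + ENNReal.ofReal ε • Q}) θ,
        P' {x | r < ENNReal.ofReal (g (dist (T.1 x) θ))} := le_iInf key
  have hδ2 : ENNReal.ofReal δ < 1 / 2 := by
    rw [show (1 : ℝ≥0∞) / 2 = ENNReal.ofReal (1 / 2) by
      rw [ENNReal.ofReal_div_of_pos] <;> norm_num]
    exact (ENNReal.ofReal_lt_ofReal_iff (by norm_num)).mpr hδ.2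
  exact absurd (le_trans hinf hr) (not_le.mpr hδ2)
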